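/- Let p be a prime, l ≥ 2, and q = p^{2l}. The number of pairs (a,b) with a ∈ GF(p^l)*, b ∈ GF(q), satisfying Tr_{p^l/p}(b^{p^l+1}/a) = 0 and such that exactly one of Tr_{p^l/p}(a) and Tr_{q/p}(b) equals 0, is p^{2l−2}(p−1)(2p^{l−1}−1). -/

import Mathlib

set_option linter.unusedSectionVars false
open Finset Polynomial

section
variable (p l : ℕ) {F : Type*} [Field F] [Fintype F] [DecidableEq F]

lemma pow_fiber_le (m : ℕ) (hm : 0 < m) (z : F) :
    (univ.filter fun x : F => x ^ m = z).card ≤ m := by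
  classical
  have hsub : (univ.filter fun x : F => x ^ m = z) ⊆ (X ^ m - C z : F[X]).roots.toFinset := by
    intro x hx
    simp only [mem_filter, mem_univ, true_and] at hx
    rw [Multiset.mem_toFinset, mem_roots (X_pow_sub_C_ne_zero hm z)]
    simp [IsRoot, hx]
  calc (univ.filter fun x : F => x ^ m = z).card ≤ _ := Finset.card_le_card hsub
    _ ≤ Multiset.card (X ^ m - C z : F[X]).roots := Multiset.toFinset_card_le _
    _ ≤ (X ^ m - C z : F[X]).natDegree := card_roots' _
    _ = m := natDegree_X_pow_sub_C

lemma count_pow_fiber (hp : p.Prime) (hcard : Fintype.card F = p ^ (2 * l)) (hl : 1 ≤ l)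
    (m n : ℕ) (hmn : m * n = p ^ (2 * l) - 1) (y : F) (hy : y ^ n = 1) :
    (univ.filter fun x : F => x ^ m = y).card = m := by
  classical
  have hq1 : 2 ≤ p ^ (2 * l) := by
    calc 2 ≤ p := hp.two_le
    _ = p ^ 1 := (pow_one p).symm
    _ ≤ p ^ (2 * l) := Nat.pow_le_pow_right hp.pos (by omega)
  have hm : 0 < m := by
    rcases Nat.eq_zero_or_pos m with h | h
    · subst h; omega
    · exact h
  have hn : 0 < n := by
    rcases Nat.eq_zero_or_pos n with h | h
    · subst h; omega
    · exact h
  set B := univ.filter fun z : F => z ^ n = 1 with hB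
  have hBcard : B.card ≤ n := pow_fiber_le n hn 1
  have hyB : y ∈ B := by simp [hB, hy]
  -- partition of nonzero elements
  have hbiU : (univ.filter fun x : F => x ≠ 0) = B.biUnion (fun z => univ.filter fun x : F => x ^ m = z) := by
    ext x
    simp only [mem_filter, mem_univ, true_and, mem_biUnion, hB]
    constructor
    · intro hx
      refine ⟨x ^ m, ?_, rfl⟩
      rw [← pow_mul, hmn, ← hcard]
      exact FiniteField.pow_card_sub_one_eq_one x hx
    · rintro ⟨z, hz, rfl⟩
      intro h0
      rw [h0, zero_pow hm.ne', zero_pow hn.ne'] at hz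
      exact zero_ne_one hz
  have hdisj : ∀ z1 ∈ B, ∀ z2 ∈ B, z1 ≠ z2 →
      Disjoint (univ.filter fun x : F => x ^ m = z1) (univ.filter fun x : F => x ^ m = z2) := by
    intro z1 _ z2 _ hne
    simp only [Finset.disjoint_left, mem_filter, mem_univ, true_and]
    rintro a rfl h2
    exact hne h2
  have hNZ : (univ.filter fun x : F => x ≠ 0).card = p ^ (2 * l) - 1 := by
    rw [Finset.filter_ne', Finset.card_erase_of_mem (mem_univ 0), Finset.card_univ, hcard]
  have hsum : ∑ z ∈ B, (univ.filter fun x : F => x ^ m = z).card = p ^ (2 * l) - 1 := by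
    rw [← hNZ, hbiU, Finset.card_biUnion hdisj]
  -- each fiber card = m
  by_contra hne
  have hlt : (univ.filter fun x : F => x ^ m = y).card < m :=
    lt_of_le_of_ne (pow_fiber_le m hm y) hne
  have : ∑ z ∈ B, (univ.filter fun x : F => x ^ m = z).card < ∑ z ∈ B, m :=
    Finset.sum_lt_sum (fun z _ => pow_fiber_le m hm z) ⟨y, hyB, hlt⟩
  rw [hsum, Finset.sum_const, smul_eq_mul] at this
  have h2 : p ^ (2*l) - 1 < n * m := lt_of_lt_of_le this (Nat.mul_le_mul_right m hBcard)
  rw [mul_comm n m] at h2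
  omega
lemma count_pow_self (hp : p.Prime) (hcard : Fintype.card F = p ^ (2 * l)) (hl : 1 ≤ l)
    (m n : ℕ) (hmn : m * n = p ^ (2 * l) - 1) :
    (univ.filter fun x : F => x ^ (m + 1) = x).card = m + 1 := by
  classical
  have hq1 : 2 ≤ p ^ (2 * l) := by
    calc 2 ≤ p := hp.two_le
    _ = p ^ 1 := (pow_one p).symm
    _ ≤ p ^ (2 * l) := Nat.pow_le_pow_right hp.pos (by omega)
  have hm : 0 < m := by
    rcases Nat.eq_zero_or_pos m with h | h
    · subst h; omega
    · exact h
  have key : (univ.filter fun x : F => x ^ (m+1) = x)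
      = insert (0:F) (univ.filter fun x : F => x ^ m = 1) := by
    ext x
    simp only [mem_filter, mem_univ, true_and, mem_insert]
    constructor
    · intro hx
      rcases eq_or_ne x 0 with h0 | h0
      · exact Or.inl h0
      · refine Or.inr ?_
        have : x ^ m * x = 1 * x := by rw [← pow_succ, hx, one_mul]
        exact mul_right_cancel₀ h0 this
    · rintro (rfl | hx)
      · simp [pow_succ]
      · rw [pow_succ, hx, one_mul]
  rw [key, Finset.card_insert_of_notMem (by simp [zero_pow hm.ne']),
    count_pow_fiber p l hp hcard hl m n hmn 1 (one_pow n)]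

lemma root_bound (hp : p.Prime) (r : ℕ) (hr : 1 ≤ r) :
    (univ.filter fun x : F => ∑ i ∈ Finset.range r, x ^ p ^ i = 0).card ≤ p ^ (r - 1) := by
  classical
  set f : Polynomial F := ∑ i ∈ Finset.range r, X ^ p ^ i with hf
  have hcoeff : f.coeff (p ^ (r-1)) = 1 := by
    rw [hf, Polynomial.finset_sum_coeff]
    have : ∀ i ∈ Finset.range r, ((X : F[X]) ^ p ^ i).coeff (p ^ (r-1)) = if i = r-1 then 1 else 0 := by
      intro i hi
      rw [Polynomial.coeff_X_pow]
      congr 1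
      simp only [eq_iff_iff]
      constructor
      · intro h
        exact Nat.pow_right_injective hp.two_le h.symm
      · intro h; rw [h]
    rw [Finset.sum_congr rfl this, Finset.sum_ite_eq' (Finset.range r) (r-1) (fun _ => (1:F))]
    simp [Finset.mem_range]; omega
  have hf0 : f ≠ 0 := fun h => by simp [h] at hcoeff
  have hdeg : f.natDegree ≤ p ^ (r - 1) := by
    apply Polynomial.natDegree_sum_le_of_forall_le
    intro i hi
    rw [Polynomial.natDegree_X_pow]
    exact Nat.pow_le_pow_right hp.pos (by simp only [Finset.mem_range] at hi; omega)
  have hsub : (univ.filter fun x : F => ∑ i ∈ Finset.range r, x ^ p ^ i = 0) ⊆ f.roots.toFinset := by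
    intro x hx
    simp only [mem_filter, mem_univ, true_and] at hx
    rw [Multiset.mem_toFinset, mem_roots hf0]
    simp [IsRoot, hf, Polynomial.eval_finset_sum, hx]
  calc (univ.filter fun x : F => ∑ i ∈ Finset.range r, x ^ p ^ i = 0).card
      ≤ _ := Finset.card_le_card hsub
    _ ≤ Multiset.card f.roots := Multiset.toFinset_card_le _
    _ ≤ f.natDegree := card_roots' _
    _ ≤ p ^ (r-1) := hdeg

lemma add_fiber (hp : p.Prime) (hcard : Fintype.card F = p ^ (2 * l)) (hl : 1 ≤ l)
    (S : Finset F) (g : F → F) (k : ℕ)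
    (hsub : ∀ x ∈ S, ∀ y ∈ S, x - y ∈ S)
    (hadd : ∀ x y : F, g (x - y) = g x - g y)
    (himg : ∀ x ∈ S, (g x) ^ p = g x)
    (hker : (S.filter fun x => g x = 0).card ≤ k)
    (hcardS : S.card = p * k) :
    ∀ z : F, z ^ p = z → (S.filter fun x => g x = z).card = k := by
  classical
  -- P has p elements
  have hPcard : (univ.filter fun z : F => z ^ p = z).card = p := by
    have hdvd : (p - 1) ∣ p ^ (2*l) - 1 := by
      simpa using Nat.sub_dvd_pow_sub_pow p 1 (2*l)
    obtain ⟨n, hn⟩ := hdvd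
    have h1 : p - 1 + 1 = p := by have := hp.two_le; omega
    have := count_pow_self p l hp hcard hl (p-1) n hn.symm
    rwa [h1] at this
  -- each fiber has card ≤ k
  have hfib_le : ∀ z : F, (S.filter fun x => g x = z).card ≤ k := by
    intro z
    rcases Finset.eq_empty_or_nonempty (S.filter fun x => g x = z) with h | ⟨x0, hx0⟩
    · simp [h]
    · simp only [mem_filter] at hx0
      refine le_trans ?_ hker
      apply Finset.card_le_card_of_injOn (fun x => x - x0)
      · intro x hx
        simp only [Finset.mem_coe, mem_filter] at hx ⊢
        exact ⟨hsub x hx.1 x0 hx0.1, by rw [hadd, hx.2, hx0.2, sub_self]⟩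
      · intro a _ b _ hab
        simpa using sub_left_injective.eq_iff.mp hab
  -- partition
  have hbiU : S = (univ.filter fun z : F => z ^ p = z).biUnion
      (fun z => S.filter fun x => g x = z) := by
    ext x
    simp only [mem_biUnion, mem_filter, mem_univ, true_and]
    constructor
    · intro hx; exact ⟨g x, himg x hx, hx, rfl⟩
    · rintro ⟨z, _, hx, _⟩; exact hx
  have hdisj : ∀ z1 ∈ (univ.filter fun z : F => z ^ p = z), ∀ z2 ∈ (univ.filter fun z : F => z ^ p = z),
      z1 ≠ z2 → Disjoint (S.filter fun x => g x = z1) (S.filter fun x => g x = z2) := by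
    intro z1 _ z2 _ hne
    simp only [Finset.disjoint_left, mem_filter]
    rintro a ⟨_, h1⟩ ⟨_, h2⟩
    exact hne (h1 ▸ h2 ▸ rfl)
  have hsum : ∑ z ∈ (univ.filter fun z : F => z ^ p = z), (S.filter fun x => g x = z).card = p * k := by
    calc ∑ z ∈ (univ.filter fun z : F => z ^ p = z), (S.filter fun x => g x = z).card
        = ((univ.filter fun z : F => z ^ p = z).biUnion (fun z => S.filter fun x => g x = z)).card :=
          (Finset.card_biUnion hdisj).symm
      _ = S.card := by rw [← hbiU]
      _ = p * k := hcardS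
  intro z hz
  by_contra hne
  have hlt : (S.filter fun x => g x = z).card < k := lt_of_le_of_ne (hfib_le z) hne
  have hzP : z ∈ (univ.filter fun z : F => z ^ p = z) := by simp [hz]
  have : ∑ w ∈ (univ.filter fun z : F => z ^ p = z), (S.filter fun x => g x = w).card
      < ∑ _w ∈ (univ.filter fun z : F => z ^ p = z), k :=
    Finset.sum_lt_sum (fun w _ => hfib_le w) ⟨z, hzP, hlt⟩
  rw [hsum, Finset.sum_const, smul_eq_mul, hPcard] at this
  omega
/-- partial trace sum -/
def tr (p r : ℕ) {F : Type*} [Field F] (x : F) : F := ∑ i ∈ Finset.range r, x ^ p ^ i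

lemma charp (hp : p.Prime) (hcard : Fintype.card F = p ^ (2 * l)) : CharP F p := by
  obtain ⟨n, hrp, hc⟩ := FiniteField.card F (ringChar F)
  have : ringChar F = p := by
    have h1 : ringChar F ∣ p ^ (2*l) := hcard ▸ hc ▸ dvd_pow_self _ n.pos.ne'
    exact ((Nat.prime_dvd_prime_iff_eq hrp hp).mp (hrp.dvd_of_dvd_pow h1))
  exact ringChar.of_eq this

lemma pfix [CharP F p] {t : F} (ht : t ^ p = t) : ∀ i, t ^ p ^ i = t := by
  intro i
  induction i with
  | zero => simp
  | succ n ih => rw [pow_succ, pow_mul, ih, ht]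

lemma tr_sub (hp : p.Prime) [CharP F p] (r : ℕ) (x y : F) :
    tr p r (x - y) = tr p r x - tr p r y := by
  haveI : Fact p.Prime := ⟨hp⟩
  unfold tr
  rw [← Finset.sum_sub_distrib]
  exact Finset.sum_congr rfl fun i _ => sub_pow_char_pow x y i

lemma tr_add (hp : p.Prime) [CharP F p] (r : ℕ) (x y : F) :
    tr p r (x + y) = tr p r x + tr p r y := by
  haveI : Fact p.Prime := ⟨hp⟩
  unfold tr
  rw [← Finset.sum_add_distrib]
  exact Finset.sum_congr rfl fun i _ => add_pow_char_pow p i (x := x) (y := y)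

lemma tr_smul [CharP F p] (r : ℕ) {t : F} (ht : t ^ p = t) (x : F) :
    tr p r (t * x) = t * tr p r x := by
  unfold tr
  rw [Finset.mul_sum]
  exact Finset.sum_congr rfl fun i _ => by rw [mul_pow, pfix p ht]

lemma tr_mem_P (hp : p.Prime) [CharP F p] (r : ℕ) {x : F} (hx : x ^ p ^ r = x) :
    (tr p r x) ^ p = tr p r x := by
  haveI : Fact p.Prime := ⟨hp⟩
  have h1 : (tr p r x) ^ p = ∑ i ∈ Finset.range r, x ^ p ^ (i+1) := by
    unfold tr
    rw [sum_pow_char]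
    exact Finset.sum_congr rfl fun i _ => by rw [← pow_mul, ← pow_succ]
  have h2 : ∑ i ∈ Finset.range (r+1), x ^ p ^ i = (∑ i ∈ Finset.range r, x ^ p ^ (i+1)) + x ^ p ^ 0 :=
    Finset.sum_range_succ' _ r
  have h3 : ∑ i ∈ Finset.range (r+1), x ^ p ^ i = (∑ i ∈ Finset.range r, x ^ p ^ i) + x ^ p ^ r :=
    Finset.sum_range_succ _ r
  have h4 : (∑ i ∈ Finset.range r, x ^ p ^ (i+1)) + x = (∑ i ∈ Finset.range r, x ^ p ^ i) + x := by
    calc (∑ i ∈ Finset.range r, x ^ p ^ (i+1)) + x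
        = (∑ i ∈ Finset.range r, x ^ p ^ (i+1)) + x ^ p ^ 0 := by rw [pow_zero, pow_one]
      _ = (∑ i ∈ Finset.range r, x ^ p ^ i) + x ^ p ^ r := by rw [← h2, h3]
      _ = (∑ i ∈ Finset.range r, x ^ p ^ i) + x := by rw [hx]
  rw [h1, add_right_cancel h4]; rfl

lemma tr_split (x : F) : tr p (2*l) x = tr p l x + tr p l (x ^ p ^ l) := by
  unfold tr
  rw [two_mul, Finset.sum_range_add]
  congr 1
  exact Finset.sum_congr rfl fun i _ => by rw [← pow_mul, ← pow_add]
lemma q_arith (hp : p.Prime) (hl : 1 ≤ l) :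
    (p ^ l - 1) * (p ^ l + 1) = p ^ (2 * l) - 1 := by
  have h2 : 2 ≤ p ^ l := by
    calc 2 ≤ p := hp.two_le
    _ = p ^ 1 := (pow_one p).symm
    _ ≤ p ^ l := Nat.pow_le_pow_right hp.pos hl
  have hq : p ^ (2 * l) = p ^ l * p ^ l := by rw [two_mul, pow_add]
  rw [hq]
  have h : (p ^ l - 1) * (p ^ l + 1) = p ^ l * p ^ l + p ^ l - (p ^ l + 1) := by
    rw [Nat.sub_one_mul, Nat.mul_add, mul_one]
  rw [h]
  generalize p ^ l * p ^ l = k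
  omega

lemma fiber_tauK (hp : p.Prime) (hcard : Fintype.card F = p ^ (2 * l)) (hl : 1 ≤ l) [CharP F p] :
    ∀ s : F, s ^ p = s →
      (univ.filter fun x : F => x ^ p ^ l = x ∧ tr p l x = s).card = p ^ (l - 1) := by
  haveI : Fact p.Prime := ⟨hp⟩
  intro s hs
  have h := add_fiber p l hp hcard hl (univ.filter fun x : F => x ^ p ^ l = x) (tr p l) (p ^ (l-1))
    (by
      intro x hx y hy
      simp only [mem_filter, mem_univ, true_and] at *
      rw [sub_pow_char_pow x y l, hx, hy])
    (fun x y => tr_sub p hp l x y)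
    (by
      intro x hx
      simp only [mem_filter, mem_univ, true_and] at hx
      exact tr_mem_P p hp l hx)
    (by
      refine le_trans (Finset.card_le_card ?_) (root_bound p hp l hl)
      intro x hx
      simp only [mem_filter, mem_univ, true_and, Finset.filter_filter] at hx ⊢
      exact hx.2)
    (by
      have hm : p ^ l - 1 + 1 = p ^ l := by
        have : 1 ≤ p ^ l := Nat.one_le_pow _ _ hp.pos
        omega
      have := count_pow_self p l hp hcard hl (p ^ l - 1) (p ^ l + 1) (by rw [q_arith p l hp hl])
      rw [hm] at this
      rw [this]
      have h2l : l = (l - 1) + 1 := by omega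
      conv_lhs => rw [h2l]
      rw [pow_succ, mul_comm]) s hs
  rw [Finset.filter_filter] at h
  exact h

lemma fiber_T (hp : p.Prime) (hcard : Fintype.card F = p ^ (2 * l)) (hl : 1 ≤ l) [CharP F p] :
    ∀ u : F, u ^ p = u →
      (univ.filter fun b : F => tr p (2*l) b = u).card = p ^ (2 * l - 1) := by
  haveI : Fact p.Prime := ⟨hp⟩
  intro u hu
  have h := add_fiber p l hp hcard hl univ (tr p (2*l)) (p ^ (2*l-1))
    (fun x _ y _ => mem_univ _)
    (fun x y => tr_sub p hp (2*l) x y)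
    (by
      intro x _
      apply tr_mem_P p hp (2*l)
      rw [← hcard]
      exact FiniteField.pow_card x)
    (by
      refine le_trans (Finset.card_le_card ?_) (root_bound p hp (2*l) (by omega))
      intro x hx
      simp only [mem_filter, mem_univ, true_and] at hx ⊢
      exact hx)
    (by
      rw [Finset.card_univ, hcard]
      have h2l : 2*l = (2*l - 1) + 1 := by omega
      conv_lhs => rw [h2l]
      rw [pow_succ, mul_comm]) u hu
  exact h
lemma card_P (hp : p.Prime) (hcard : Fintype.card F = p ^ (2 * l)) (hl : 1 ≤ l) :
    (univ.filter fun z : F => z ^ p = z).card = p := by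
  have hdvd : (p - 1) ∣ p ^ (2*l) - 1 := by
    simpa using Nat.sub_dvd_pow_sub_pow p 1 (2*l)
  obtain ⟨n, hn⟩ := hdvd
  have h1 : p - 1 + 1 = p := by have := hp.two_le; omega
  have := count_pow_self p l hp hcard hl (p-1) n hn.symm
  rwa [h1] at this

lemma norm_memK (hcard : Fintype.card F = p ^ (2 * l)) (b : F) :
    (b ^ (p ^ l + 1)) ^ p ^ l = b ^ (p ^ l + 1) := by
  have key : (b ^ p ^ l) ^ p ^ l = b := by
    rw [← pow_mul, ← pow_add, ← two_mul, ← hcard]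
    exact FiniteField.pow_card b
  calc (b ^ (p ^ l + 1)) ^ p ^ l = ((b ^ p ^ l) * b) ^ p ^ l := by rw [← pow_succ]
    _ = (b ^ p ^ l) ^ p ^ l * b ^ p ^ l := mul_pow _ _ _
    _ = b * b ^ p ^ l := by rw [key]
    _ = b ^ (p ^ l + 1) := by rw [mul_comm, ← pow_succ]

lemma Q_shift (hp : p.Prime) [CharP F p] (a : F) (ha0 : a ≠ 0) (haK : a ^ p ^ l = a)
    (b t : F) (ht : t ^ p = t) :
    tr p l ((b + t * a) ^ (p ^ l + 1) / a)
      = tr p l (b ^ (p ^ l + 1) / a) + t * tr p (2*l) b + t ^ 2 * tr p l a := by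
  haveI : Fact p.Prime := ⟨hp⟩
  have hta : (t * a) ^ p ^ l = t * a := by
    rw [mul_pow, pfix p ht l, haK]
  have hexp : (b + t * a) ^ (p ^ l + 1) / a
      = b ^ (p ^ l + 1) / a + (t * (b ^ p ^ l + b) + t ^ 2 * a) := by
    have h1 : (b + t * a) ^ (p ^ l + 1) = (b + t*a) ^ (p ^ l) * (b + t*a) := by
      rw [← pow_succ]
    have h2 : (b + t * a) ^ (p ^ l) = b ^ p ^ l + t * a := by
      rw [add_pow_char_pow p l (x := b) (y := t*a), hta]
    rw [h1, h2]
    have h3 : b ^ (p ^ l + 1) = b ^ p ^ l * b := by rw [← pow_succ]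
    field_simp
    ring
  rw [hexp, tr_add p hp, tr_add p hp, tr_smul p l ht, tr_smul p l (t := t^2)
    (by rw [← pow_mul, mul_comm, pow_mul, ht]), tr_add p hp]
  have h4 : tr p (2*l) b = tr p l b + tr p l (b ^ p ^ l) := tr_split p l b
  rw [h4]
  ring

lemma T_shift (hp : p.Prime) [CharP F p] (a : F) (haK : a ^ p ^ l = a) (haτ : tr p l a = 0)
    (b t : F) (ht : t ^ p = t) :
    tr p (2*l) (b + t * a) = tr p (2*l) b := by
  haveI : Fact p.Prime := ⟨hp⟩
  have hta : (t * a) ^ p ^ l = t * a := by rw [mul_pow, pfix p ht l, haK]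
  rw [tr_add p hp, tr_split p l (t*a), hta, tr_smul p l ht, haτ]
  ring

lemma sliceW (hp : p.Prime) (hcard : Fintype.card F = p ^ (2 * l)) (hl : 1 ≤ l) [CharP F p]
    (a : F) (ha0 : a ≠ 0) (haK : a ^ p ^ l = a) (haτ : tr p l a = 0)
    (u : F) (hu : u ^ p = u) (hu0 : u ≠ 0) :
    (univ.filter fun b : F => tr p l (b ^ (p ^ l + 1) / a) = 0 ∧ tr p (2*l) b = u).card
      = p ^ (2 * l - 2) := by
  haveI : Fact p.Prime := ⟨hp⟩
  set W : F → Finset F := fun s =>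
    univ.filter fun b : F => tr p l (b ^ (p ^ l + 1) / a) = s ∧ tr p (2*l) b = u with hW
  have hcards : ∀ s : F, s ^ p = s → (W s).card = (W 0).card := by
    intro s hs
    set t : F := s * u⁻¹ with hts
    have ht : t ^ p = t := by
      rw [hts, mul_pow, hs, inv_pow, hu]
    have htu : t * u = s := by
      rw [hts, mul_assoc, inv_mul_cancel₀ hu0, mul_one]
    have htn : (-t) ^ p = -t := by
      rw [neg_pow, neg_one_pow_char F p, ht, neg_one_mul]
    refine (Finset.card_bij' (fun b _ => b + t * a) (fun b _ => b + (-t) * a) ?_ ?_ ?_ ?_).symm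
    · intro b hb
      simp only [hW, mem_filter, mem_univ, true_and] at hb ⊢
      obtain ⟨h1, h2⟩ := hb
      refine ⟨?_, ?_⟩
      · rw [Q_shift p l hp a ha0 haK b t ht, h1, h2, haτ, htu]; ring
      · rw [T_shift p l hp a haK haτ b t ht, h2]
    · intro b hb
      simp only [hW, mem_filter, mem_univ, true_and] at hb ⊢
      obtain ⟨h1, h2⟩ := hb
      refine ⟨?_, ?_⟩
      · rw [Q_shift p l hp a ha0 haK b (-t) htn, h1, h2, haτ, neg_mul, htu]; ring
      · rw [T_shift p l hp a haK haτ b (-t) htn, h2]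
    · intro b _; ring
    · intro b _; ring
  have hpart : (univ.filter fun b : F => tr p (2*l) b = u)
      = (univ.filter fun z : F => z ^ p = z).biUnion W := by
    ext b
    simp only [mem_biUnion, hW, mem_filter, mem_univ, true_and]
    constructor
    · intro hb
      refine ⟨tr p l (b ^ (p ^ l + 1) / a), ?_, rfl, hb⟩
      apply tr_mem_P p hp l
      rw [div_pow, norm_memK p l hcard b, haK]
    · rintro ⟨z, _, _, h2⟩; exact h2
  have hdisj : ∀ z1 ∈ (univ.filter fun z : F => z ^ p = z),
      ∀ z2 ∈ (univ.filter fun z : F => z ^ p = z), z1 ≠ z2 → Disjoint (W z1) (W z2) := by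
    intro z1 _ z2 _ hne
    simp only [Finset.disjoint_left, hW, mem_filter]
    rintro b ⟨_, h1, _⟩ ⟨_, h2, _⟩
    exact hne (h1 ▸ h2 ▸ rfl)
  have hsum : ∑ z ∈ (univ.filter fun z : F => z ^ p = z), (W z).card = p ^ (2*l - 1) := by
    rw [← Finset.card_biUnion hdisj, ← hpart, fiber_T p l hp hcard hl u hu]
  have hconst : ∑ z ∈ (univ.filter fun z : F => z ^ p = z), (W z).card
      = p * (W 0).card := by
    rw [Finset.sum_congr rfl (fun z hz => hcards z (by simpa using hz))]
    rw [Finset.sum_const, smul_eq_mul, card_P p l hp hcard hl]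
  have hfin : p * (W 0).card = p * p ^ (2*l - 2) := by
    rw [← hconst, hsum]
    have h2l : 2*l - 1 = (2*l - 2) + 1 := by omega
    rw [h2l, pow_succ, mul_comm]
  have := Nat.eq_of_mul_eq_mul_left hp.pos hfin
  simpa [hW] using this
lemma tr_zero (hp : p.Prime) (r : ℕ) : tr p r (0 : F) = 0 := by
  unfold tr
  apply Finset.sum_eq_zero
  intro i _
  exact zero_pow (pow_pos hp.pos i).ne'

/-- the count of `b` with `Q b = 0` and `T b ≠ 0`, for `a ∈ K*` with `τ a = 0`. -/
lemma count_G1 (hp : p.Prime) (hcard : Fintype.card F = p ^ (2 * l)) (hl : 1 ≤ l) [CharP F p]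
    (a : F) (ha0 : a ≠ 0) (haK : a ^ p ^ l = a) (haτ : tr p l a = 0) :
    (univ.filter fun b : F => tr p l (b ^ (p ^ l + 1) / a) = 0 ∧ tr p (2*l) b ≠ 0).card
      = (p - 1) * p ^ (2 * l - 2) := by
  haveI : Fact p.Prime := ⟨hp⟩
  set P0 := (univ.filter fun z : F => z ^ p = z).erase 0 with hP0
  have hpart : (univ.filter fun b : F => tr p l (b ^ (p ^ l + 1) / a) = 0 ∧ tr p (2*l) b ≠ 0)
      = P0.biUnion (fun u => univ.filter fun b : F =>
          tr p l (b ^ (p ^ l + 1) / a) = 0 ∧ tr p (2*l) b = u) := by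
    ext b
    simp only [hP0, mem_biUnion, mem_filter, mem_univ, true_and, mem_erase]
    constructor
    · rintro ⟨h1, h2⟩
      exact ⟨tr p (2*l) b, ⟨h2, tr_mem_P p hp (2*l) (by rw [← hcard]; exact FiniteField.pow_card b)⟩, h1, rfl⟩
    · rintro ⟨u, ⟨hu0, _⟩, h1, h2⟩
      exact ⟨h1, h2 ▸ hu0⟩
  have hdisj : ∀ u1 ∈ P0, ∀ u2 ∈ P0, u1 ≠ u2 →
      Disjoint (univ.filter fun b : F => tr p l (b ^ (p ^ l + 1) / a) = 0 ∧ tr p (2*l) b = u1)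
        (univ.filter fun b : F => tr p l (b ^ (p ^ l + 1) / a) = 0 ∧ tr p (2*l) b = u2) := by
    intro u1 _ u2 _ hne
    simp only [Finset.disjoint_left, mem_filter]
    rintro b ⟨_, _, h1⟩ ⟨_, _, h2⟩
    exact hne (h1 ▸ h2 ▸ rfl)
  rw [hpart, Finset.card_biUnion hdisj]
  have hcardP0 : P0.card = p - 1 := by
    rw [hP0, Finset.card_erase_of_mem (by simp [hp.ne_zero]), card_P p l hp hcard hl]
  rw [Finset.sum_congr rfl (fun u hu => by
    simp only [hP0, mem_erase, mem_filter, mem_univ, true_and] at hu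
    exact sliceW p l hp hcard hl a ha0 haK haτ u hu.2 hu.1), Finset.sum_const, smul_eq_mul, hcardP0]

lemma bij1 (hp : p.Prime) [CharP F p] (a : F) (ha0 : a ≠ 0) (haK : a ^ p ^ l = a) :
    (univ.filter fun c : F => c ≠ 0 ∧ c ^ p ^ l = c ∧ tr p l (c / a) = 0).card
      = (univ.filter fun u : F => u ≠ 0 ∧ u ^ p ^ l = u ∧ tr p l u = 0).card := by
  refine Finset.card_bij' (fun c _ => c / a) (fun u _ => u * a) ?_ ?_ ?_ ?_
  · intro c hc
    simp only [mem_filter, mem_univ, true_and] at hc ⊢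
    exact ⟨div_ne_zero hc.1 ha0, by rw [div_pow, hc.2.1, haK], hc.2.2⟩
  · intro u hu
    simp only [mem_filter, mem_univ, true_and] at hu ⊢
    refine ⟨mul_ne_zero hu.1 ha0, by rw [mul_pow, hu.2.1, haK], ?_⟩
    rw [mul_div_assoc, div_self ha0, mul_one, hu.2.2]
  · intro c _; exact div_mul_cancel₀ c ha0
  · intro u _; exact mul_div_cancel_right₀ u ha0

lemma bij2 (hp : p.Prime) [CharP F p] (c : F) (hc0 : c ≠ 0) (hcK : c ^ p ^ l = c) :
    (univ.filter fun x : F => x ≠ 0 ∧ x ^ p ^ l = x ∧ tr p l (c / x) = 0).card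
      = (univ.filter fun u : F => u ≠ 0 ∧ u ^ p ^ l = u ∧ tr p l u = 0).card := by
  refine Finset.card_bij' (fun x _ => c / x) (fun u _ => c / u) ?_ ?_ ?_ ?_
  · intro x hx
    simp only [mem_filter, mem_univ, true_and] at hx ⊢
    exact ⟨div_ne_zero hc0 hx.1, by rw [div_pow, hx.2.1, hcK], hx.2.2⟩
  · intro u hu
    simp only [mem_filter, mem_univ, true_and] at hu ⊢
    refine ⟨div_ne_zero hc0 hu.1, by rw [div_pow, hu.2.1, hcK], ?_⟩
    have : c / (c / u) = u := by
      field_simp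
    rw [this, hu.2.2]
  · intro x hx
    simp only [mem_filter, mem_univ, true_and] at hx
    field_simp
  · intro u hu
    simp only [mem_filter, mem_univ, true_and] at hu
    field_simp

/-- the number of `b` with `Q b = 0`, for `a ∈ K*`. -/
lemma count_M (hp : p.Prime) (hcard : Fintype.card F = p ^ (2 * l)) (hl : 1 ≤ l) [CharP F p]
    (a : F) (ha0 : a ≠ 0) (haK : a ^ p ^ l = a) :
    (univ.filter fun b : F => tr p l (b ^ (p ^ l + 1) / a) = 0).card
      = 1 + (univ.filter fun u : F => u ≠ 0 ∧ u ^ p ^ l = u ∧ tr p l u = 0).card * (p ^ l + 1) := by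
  haveI : Fact p.Prime := ⟨hp⟩
  set Kc := univ.filter (fun c : F => c ^ p ^ l = c ∧ tr p l (c / a) = 0) with hKc
  have h0Kc : (0:F) ∈ Kc := by
    simp only [hKc, mem_filter, mem_univ, true_and]
    refine ⟨zero_pow (pow_pos hp.pos l).ne', ?_⟩
    rw [zero_div, tr_zero p hp l]
  have hpart : (univ.filter fun b : F => tr p l (b ^ (p ^ l + 1) / a) = 0)
      = Kc.biUnion (fun c => univ.filter fun b : F => b ^ (p ^ l + 1) = c) := by
    ext b
    simp only [hKc, mem_biUnion, mem_filter, mem_univ, true_and]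
    constructor
    · intro hb
      exact ⟨b ^ (p ^ l + 1), ⟨norm_memK p l hcard b, hb⟩, rfl⟩
    · rintro ⟨c, ⟨_, h2⟩, rfl⟩
      exact h2
  have hdisj : ∀ c1 ∈ Kc, ∀ c2 ∈ Kc, c1 ≠ c2 →
      Disjoint (univ.filter fun b : F => b ^ (p ^ l + 1) = c1)
        (univ.filter fun b : F => b ^ (p ^ l + 1) = c2) := by
    intro c1 _ c2 _ hne
    simp only [Finset.disjoint_left, mem_filter, mem_univ, true_and]
    rintro b rfl h2
    exact hne h2
  rw [hpart, Finset.card_biUnion hdisj, ← Finset.add_sum_erase _ _ h0Kc]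
  congr 1
  · -- fiber over zero is {0}
    have : (univ.filter fun b : F => b ^ (p ^ l + 1) = 0) = {0} := by
      ext b
      simp only [mem_filter, mem_univ, true_and, mem_singleton]
      rw [pow_eq_zero_iff (Nat.succ_ne_zero _)]
    rw [this, Finset.card_singleton]
  · -- other fibers have q + 1 elements each
    have hfib : ∀ c ∈ Kc.erase 0, (univ.filter fun b : F => b ^ (p ^ l + 1) = c).card = p ^ l + 1 := by
      intro c hc
      simp only [hKc, mem_erase, mem_filter, mem_univ, true_and] at hc
      obtain ⟨hc0, hcK, _⟩ := hc
      have hq1 : 1 ≤ p ^ l := Nat.one_le_pow _ _ hp.pos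
      have hy : c ^ (p ^ l - 1) = 1 := by
        have h1 : c ^ (p ^ l - 1) * c = 1 * c := by
          rw [← pow_succ, one_mul]
          have : p ^ l - 1 + 1 = p ^ l := by omega
          rw [this, hcK]
        exact mul_right_cancel₀ hc0 h1
      exact count_pow_fiber p l hp hcard hl (p ^ l + 1) (p ^ l - 1)
        (by rw [mul_comm, q_arith p l hp hl]) c hy
    rw [Finset.sum_congr rfl hfib, Finset.sum_const, smul_eq_mul]
    congr 1
    have herase : Kc.erase 0 = univ.filter fun c : F => c ≠ 0 ∧ c ^ p ^ l = c ∧ tr p l (c / a) = 0 := by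
      ext c
      simp only [hKc, mem_erase, mem_filter, mem_univ, true_and]
    rw [herase]
    exact bij1 p l hp a ha0 haK
lemma card_K (hp : p.Prime) (hcard : Fintype.card F = p ^ (2 * l)) (hl : 1 ≤ l) :
    (univ.filter fun x : F => x ^ p ^ l = x).card = p ^ l := by
  have hm : p ^ l - 1 + 1 = p ^ l := by
    have : 1 ≤ p ^ l := Nat.one_le_pow _ _ hp.pos
    omega
  have := count_pow_self p l hp hcard hl (p ^ l - 1) (p ^ l + 1) (by rw [q_arith p l hp hl])
  rwa [hm] at this

lemma count_S2 (hp : p.Prime) (hcard : Fintype.card F = p ^ (2 * l)) (hl : 1 ≤ l) [CharP F p] :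
    ∑ a ∈ (univ.filter fun a : F => a ≠ 0 ∧ a ^ p ^ l = a),
      (univ.filter fun b : F => tr p l (b ^ (p ^ l + 1) / a) = 0 ∧ tr p (2*l) b = 0).card
    = (univ.filter fun a : F => a ≠ 0 ∧ a ^ p ^ l = a).card
      + (univ.filter fun b : F => b ≠ 0 ∧ tr p (2*l) b = 0).card
        * (univ.filter fun u : F => u ≠ 0 ∧ u ^ p ^ l = u ∧ tr p l u = 0).card := by
  haveI : Fact p.Prime := ⟨hp⟩
  set A := univ.filter fun a : F => a ≠ 0 ∧ a ^ p ^ l = a with hA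
  set TB0 := univ.filter fun b : F => tr p (2*l) b = 0 with hTB0
  -- swap the order of summation
  have hswap : ∑ a ∈ A, (univ.filter fun b : F =>
        tr p l (b ^ (p ^ l + 1) / a) = 0 ∧ tr p (2*l) b = 0).card
      = ∑ b ∈ TB0, (A.filter fun a : F => tr p l (b ^ (p ^ l + 1) / a) = 0).card := by
    have h1 : ∀ a ∈ A, (univ.filter fun b : F =>
        tr p l (b ^ (p ^ l + 1) / a) = 0 ∧ tr p (2*l) b = 0).card
        = ∑ b : F, if tr p l (b ^ (p ^ l + 1) / a) = 0 ∧ tr p (2*l) b = 0 then 1 else 0 :=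
      fun a _ => Finset.card_filter _ _
    rw [Finset.sum_congr rfl h1, Finset.sum_comm]
    have h2 : ∀ b : F, ∑ a ∈ A, (if tr p l (b ^ (p ^ l + 1) / a) = 0 ∧ tr p (2*l) b = 0 then 1 else 0)
        = if tr p (2*l) b = 0 then (A.filter fun a : F => tr p l (b ^ (p ^ l + 1) / a) = 0).card else 0 := by
      intro b
      by_cases hT : tr p (2*l) b = 0
      · simp only [hT, and_true, if_true]
        exact (Finset.card_filter _ _).symm
      · simp [hT]
    rw [Finset.sum_congr rfl (fun b _ => h2 b), ← Finset.sum_filter]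
  rw [hswap]
  have h0TB0 : (0:F) ∈ TB0 := by simp [hTB0, tr_zero p hp (2*l)]
  rw [← Finset.add_sum_erase _ _ h0TB0]
  congr 1
  · -- the b = 0 term contributes the cardinality of A
    have : (A.filter fun a : F => tr p l ((0:F) ^ (p ^ l + 1) / a) = 0) = A := by
      apply Finset.filter_true_of_mem
      intro a _
      rw [zero_pow (Nat.succ_ne_zero _), zero_div, tr_zero p hp l]
    rw [this]
  · -- remaining b's each contribute κ0
    have hfib : ∀ b ∈ TB0.erase 0,
        (A.filter fun a : F => tr p l (b ^ (p ^ l + 1) / a) = 0).card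
        = (univ.filter fun u : F => u ≠ 0 ∧ u ^ p ^ l = u ∧ tr p l u = 0).card := by
      intro b hb
      have hb0 : b ≠ 0 := (Finset.mem_erase.mp hb).1
      have hc0 : b ^ (p ^ l + 1) ≠ 0 := pow_ne_zero _ hb0
      have hcK : (b ^ (p ^ l + 1)) ^ p ^ l = b ^ (p ^ l + 1) := norm_memK p l hcard b
      have heq : (A.filter fun a : F => tr p l (b ^ (p ^ l + 1) / a) = 0)
          = univ.filter fun a : F => a ≠ 0 ∧ a ^ p ^ l = a ∧ tr p l (b ^ (p ^ l + 1) / a) = 0 := by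
        rw [hA, Finset.filter_filter]
        apply Finset.filter_congr
        intro a _
        constructor
        · rintro ⟨⟨x1, x2⟩, x3⟩; exact ⟨x1, x2, x3⟩
        · rintro ⟨x1, x2, x3⟩; exact ⟨⟨x1, x2⟩, x3⟩
      rw [heq]
      exact bij2 p l hp (b ^ (p ^ l + 1)) hc0 hcK
    rw [Finset.sum_congr rfl hfib, Finset.sum_const, smul_eq_mul]
    congr 1
    have : TB0.erase 0 = univ.filter fun b : F => b ≠ 0 ∧ tr p (2*l) b = 0 := by
      ext b
      simp only [hTB0, mem_erase, mem_filter, mem_univ, true_and]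
    rw [this]
lemma card_filter_prod {α β : Type*} [Fintype α] [Fintype β] (P : α × β → Prop) [DecidablePred P] :
    (univ.filter P).card = ∑ a : α, (univ.filter fun b : β => P (a, b)).card := by
  rw [Finset.card_filter, Fintype.sum_prod_type]
  exact Finset.sum_congr rfl fun a _ => (Finset.card_filter _ _).symm
end

theorem stmt6 (p l : ℕ) (hp : p.Prime) (hl : 2 ≤ l) (F : Type*) [Field F] [Fintype F]
    (hcard : Fintype.card F = p ^ (2 * l)) :
    Set.ncard {ab : F × F |
        ab.1 ≠ 0 ∧ ab.1 ^ p ^ l = ab.1 ∧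
        (∑ i ∈ Finset.range l, (ab.2 ^ (p ^ l + 1) / ab.1) ^ p ^ i) = 0 ∧
        (((∑ i ∈ Finset.range l, ab.1 ^ p ^ i) = 0 ∧
            (∑ i ∈ Finset.range (2 * l), ab.2 ^ p ^ i) ≠ 0) ∨
          ((∑ i ∈ Finset.range l, ab.1 ^ p ^ i) ≠ 0 ∧
            (∑ i ∈ Finset.range (2 * l), ab.2 ^ p ^ i) = 0))} =
      p ^ (2 * l - 2) * (p - 1) * (2 * p ^ (l - 1) - 1) := by
  classical
  haveI : CharP F p := charp p l hp hcard
  haveI : Fact p.Prime := ⟨hp⟩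
  have hl1 : 1 ≤ l := by omega
  have htr : ∀ (r : ℕ) (x : F), (∑ i ∈ Finset.range r, x ^ p ^ i) = tr p r x := fun _ _ => rfl
  rw [Set.ncard_eq_toFinset_card', Set.toFinset_setOf]
  simp only [htr]
  rw [card_filter_prod]
  set A := univ.filter fun a : F => a ≠ 0 ∧ a ^ p ^ l = a with hA
  set K0 := univ.filter fun u : F => u ≠ 0 ∧ u ^ p ^ l = u ∧ tr p l u = 0 with hK0
  set B0 := univ.filter fun b : F => b ≠ 0 ∧ tr p (2*l) b = 0 with hB0
  set g : F → ℕ := fun a => (univ.filter fun b : F =>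
      a ≠ 0 ∧ a ^ p ^ l = a ∧ tr p l (b ^ (p ^ l + 1) / a) = 0 ∧
        ((tr p l a = 0 ∧ tr p (2*l) b ≠ 0) ∨ (tr p l a ≠ 0 ∧ tr p (2*l) b = 0))).card with hg
  set G0 : F → ℕ := fun a => (univ.filter fun b : F =>
      tr p l (b ^ (p ^ l + 1) / a) = 0 ∧ tr p (2*l) b = 0).card with hG0
  -- restrict the outer sum to A
  have hsum1 : ∑ a : F, g a = ∑ a ∈ A, g a := by
    refine (Finset.sum_subset (Finset.subset_univ A) ?_).symm
    intro x _ hx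
    rw [hA, mem_filter] at hx
    push_neg at hx
    rw [hg]
    simp only
    rw [Finset.card_eq_zero, Finset.filter_eq_empty_iff]
    intro b _
    rintro ⟨h1, h2, _⟩
    exact (hx (mem_univ x) h1) h2
  rw [hsum1]
  -- split A according to whether τ a = 0
  rw [← Finset.sum_filter_add_sum_filter_not A (fun a => tr p l a = 0) g]
  -- the τ a = 0 part
  have hA0K0 : A.filter (fun a => tr p l a = 0) = K0 := by
    ext a
    rw [hA, hK0]
    simp only [mem_filter, mem_univ, true_and]
    tauto
  have hstep4 : ∀ a ∈ A.filter (fun a => tr p l a = 0),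
      g a = (p - 1) * p ^ (2 * l - 2) := by
    intro a ha
    simp only [mem_filter, hA, mem_univ, true_and] at ha
    obtain ⟨⟨ha0, haK⟩, haτ⟩ := ha
    rw [hg]
    simp only
    have heq : (univ.filter fun b : F =>
        a ≠ 0 ∧ a ^ p ^ l = a ∧ tr p l (b ^ (p ^ l + 1) / a) = 0 ∧
          ((tr p l a = 0 ∧ tr p (2*l) b ≠ 0) ∨ (tr p l a ≠ 0 ∧ tr p (2*l) b = 0)))
        = univ.filter fun b : F =>
            tr p l (b ^ (p ^ l + 1) / a) = 0 ∧ tr p (2*l) b ≠ 0 := by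
      apply Finset.filter_congr
      intro b _
      simp [ha0, haK, haτ]
    rw [heq]
    exact count_G1 p l hp hcard hl1 a ha0 haK haτ
  rw [Finset.sum_congr rfl hstep4, Finset.sum_const, smul_eq_mul, hA0K0]
  -- the τ a ≠ 0 part
  have hstep5 : ∀ a ∈ A.filter (fun a => ¬ tr p l a = 0), g a = G0 a := by
    intro a ha
    simp only [mem_filter, hA, mem_univ, true_and] at ha
    obtain ⟨⟨ha0, haK⟩, haτ⟩ := ha
    rw [hg, hG0]
    simp only
    congr 1
    apply Finset.filter_congr
    intro b _
    simp [ha0, haK, haτ]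
  rw [Finset.sum_congr rfl hstep5]
  -- relation between the partial sums of G0 over A
  have hsplitG0 : ∑ a ∈ A.filter (fun a => tr p l a = 0), G0 a
      + ∑ a ∈ A.filter (fun a => ¬ tr p l a = 0), G0 a = ∑ a ∈ A, G0 a :=
    Finset.sum_filter_add_sum_filter_not A _ G0
  have hS2 : ∑ a ∈ A, G0 a = A.card + B0.card * K0.card := by
    rw [hG0, hA, hB0, hK0]
    exact count_S2 p l hp hcard hl1
  -- per-a relation on A0 : G0 a + (p-1)p^{2l-2} = 1 + κ0 (p^l + 1)
  have hstep7 : ∀ a ∈ A.filter (fun a => tr p l a = 0),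
      G0 a + (p - 1) * p ^ (2 * l - 2) = 1 + K0.card * (p ^ l + 1) := by
    intro a ha
    simp only [mem_filter, hA, mem_univ, true_and] at ha
    obtain ⟨⟨ha0, haK⟩, haτ⟩ := ha
    have hpq : G0 a + (univ.filter fun b : F =>
        tr p l (b ^ (p ^ l + 1) / a) = 0 ∧ ¬ tr p (2*l) b = 0).card
        = (univ.filter fun b : F => tr p l (b ^ (p ^ l + 1) / a) = 0).card := by
      rw [hG0]
      simp only
      rw [← Finset.filter_filter, ← Finset.filter_filter _ (fun b => ¬ tr p (2*l) b = 0)]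
      exact Finset.card_filter_add_card_filter_not (fun b => tr p (2*l) b = 0)
    rw [count_M p l hp hcard hl1 a ha0 haK] at hpq
    have hG1 : (univ.filter fun b : F =>
        tr p l (b ^ (p ^ l + 1) / a) = 0 ∧ ¬ tr p (2*l) b = 0).card
        = (p - 1) * p ^ (2 * l - 2) := by
      rw [← count_G1 p l hp hcard hl1 a ha0 haK haτ]
    rw [hG1] at hpq
    rw [hpq, hK0]
  have hsum7 : (∑ a ∈ A.filter (fun a => tr p l a = 0), G0 a)
      + K0.card * ((p - 1) * p ^ (2 * l - 2)) = K0.card * (1 + K0.card * (p ^ l + 1)) := by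
    have := Finset.sum_congr rfl hstep7
    rw [Finset.sum_add_distrib, Finset.sum_const, Finset.sum_const, smul_eq_mul, smul_eq_mul,
      hA0K0] at this
    rw [hA0K0]
    exact this
  -- cardinalities
  have hκ0 : K0.card + 1 = p ^ (l - 1) := by
    have hKf : K0 = (univ.filter fun x : F => x ^ p ^ l = x ∧ tr p l x = 0).erase 0 := by
      ext x
      rw [hK0]
      simp only [mem_erase, mem_filter, mem_univ, true_and]
    rw [hKf, Finset.card_erase_add_one (by
      simp only [mem_filter, mem_univ, true_and]
      exact ⟨zero_pow (pow_pos hp.pos l).ne', tr_zero p hp l⟩)]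
    exact fiber_tauK p l hp hcard hl1 0 (zero_pow hp.pos.ne')
  have hκs : A.card + 1 = p ^ l := by
    have hAf : A = (univ.filter fun x : F => x ^ p ^ l = x).erase 0 := by
      ext x
      rw [hA]
      simp only [mem_erase, mem_filter, mem_univ, true_and]
    rw [hAf, Finset.card_erase_add_one (by
      simp only [mem_filter, mem_univ, true_and]
      exact zero_pow (pow_pos hp.pos l).ne')]
    exact card_K p l hp hcard hl1
  have hβ : B0.card + 1 = p ^ (2 * l - 1) := by
    have hBf : B0 = (univ.filter fun b : F => tr p (2*l) b = 0).erase 0 := by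
      ext x
      rw [hB0]
      simp only [mem_erase, mem_filter, mem_univ, true_and]
    rw [hBf, Finset.card_erase_add_one (by
      simp only [mem_filter, mem_univ, true_and]
      exact tr_zero p hp (2*l))]
    exact fiber_T p l hp hcard hl1 0 (zero_pow hp.pos.ne')
  -- final arithmetic
  obtain ⟨k, rfl⟩ : ∃ k, l = k + 2 := ⟨l - 2, by omega⟩
  set x := ∑ a ∈ A.filter (fun a => ¬ tr p (k+2) a = 0), G0 a with hx
  set y := ∑ a ∈ A.filter (fun a => tr p (k+2) a = 0), G0 a with hy
  have e1 : 2 * (k + 2) - 2 = 2 * k + 2 := by omega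
  have e2 : (k + 2) - 1 = k + 1 := by omega
  have e3 : 2 * (k + 2) - 1 = 2 * k + 3 := by omega
  rw [e1, e2]
  rw [e1] at hsum7
  rw [e2] at hκ0
  rw [e3] at hβ
  have hp1 : 1 ≤ p := hp.one_le
  have hp2 : 1 ≤ 2 * p ^ (k + 1) := by
    have : 1 ≤ p ^ (k+1) := Nat.one_le_pow _ _ hp.pos
    omega
  zify [hp1, hp2] at hsum7 hS2 hsplitG0 hκ0 hκs hβ ⊢
  have hv1 : (K0.card : ℤ) = (p:ℤ) ^ (k+1) - 1 := by linarith
  have hv2 : (A.card : ℤ) = (p:ℤ) ^ (k+2) - 1 := by linarith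
  have hv3 : (B0.card : ℤ) = (p:ℤ) ^ (2*k+3) - 1 := by linarith
  rw [hv1] at hsum7 ⊢
  rw [hv1, hv2, hv3] at hS2
  linear_combination hsplitG0 + hS2 - hsum7
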